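/- The minimum cost of a perfect matching M in the auxiliary graph G_aux on big clients (with δ = 1/3) is at most the optimal CVRP cost: cost(M) ≤ opt. -/

import Mathlib

/-- Cost of a walk along a list of vertices: sum of costs of consecutive edges. -/
def walkCost {α : Type*} (c : α → α → ℝ) : List α → ℝ
  | [] => 0
  | [_] => 0
  | a :: b :: rest => c a b + walkCost c (b :: rest)

/-- Cost of the tour (cycle) that starts at the depot `r`, visits the clients of `T`
in order, and returns to `r`. -/
def tourCost {α : Type*} (c : α → α → ℝ) (r : α) (T : List α) : ℝ :=
  walkCost c (r :: (T ++ [r]))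

/-- The vertices covered by a matching given as a list of (possibly degenerate) pairs:
a pair `(u,v)` with `u ≠ v` is an edge covering `u` and `v`, and a pair `(v,v)` is a
loop covering `v`. -/
def matchingEndpoints {α : Type*} [DecidableEq α] (M : List (α × α)) : List α :=
  (M.map fun p => if p.1 = p.2 then [p.1] else [p.1, p.2]).flatten

/-- Cost of a matching in the auxiliary graph: an edge `(u,v)` costs
`c(r,u) + c(u,v) + c(v,r)`; since `c(v,v) = 0`, a loop `(v,v)` costs `2·c(r,v)`. -/
def matchingCost {α : Type*} (c : α → α → ℝ) (r : α) (M : List (α × α)) : ℝ :=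
  (M.map fun p => c r p.1 + c p.1 p.2 + c p.2 r).sum

namespace CVRPAux

open List

variable {α : Type*}

lemma walkCost_nonneg (c : α → α → ℝ) (hnonneg : ∀ x y, 0 ≤ c x y) :
    ∀ l : List α, 0 ≤ walkCost c l
  | [] => le_refl 0
  | [_] => le_refl 0
  | a :: b :: rest => by
      have := walkCost_nonneg c hnonneg (b :: rest)
      simp only [walkCost]
      exact add_nonneg (hnonneg a b) this

lemma walkCost_shortcut (c : α → α → ℝ)
    (htri : ∀ x y z, c x z ≤ c x y + c y z) (hnonneg : ∀ x y, 0 ≤ c x y)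
    {l₁ l₂ : List α} (h : l₁ <+ l₂) :
    ∀ a, walkCost c (a :: l₁) ≤ walkCost c (a :: l₂) := by
  induction h with
  | slnil => intro a; exact le_refl _
  | @cons l₁ l₂ b h ih =>
    intro a
    cases l₁ with
    | nil =>
      show (0:ℝ) ≤ walkCost c (a :: b :: l₂)
      exact walkCost_nonneg c hnonneg _
    | cons x t =>
      calc walkCost c (a :: x :: t) = c a x + walkCost c (x :: t) := rfl
        _ ≤ (c a b + c b x) + walkCost c (x :: t) :=
            add_le_add (htri a b x) le_rfl
        _ = c a b + walkCost c (b :: x :: t) := by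
            show _ = c a b + (c b x + walkCost c (x :: t)); ring
        _ ≤ c a b + walkCost c (b :: l₂) := add_le_add le_rfl (ih b)
        _ = walkCost c (a :: b :: l₂) := rfl
  | @cons_cons l₁ l₂ b h ih =>
    intro a
    show c a b + walkCost c (b :: l₁) ≤ c a b + walkCost c (b :: l₂)
    exact add_le_add le_rfl (ih b)

/-- Pair up a list of at most 2 points (works for any list). -/
def pairUp : List α → List (α × α)
  | [] => []
  | [v] => [(v, v)]
  | u :: v :: rest => (u, v) :: pairUp rest

lemma pairUp_mem {l : List α} {p : α × α} (hp : p ∈ pairUp l) :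
    p.1 ∈ l ∧ p.2 ∈ l := by
  induction l using pairUp.induct with
  | case1 => simp [pairUp] at hp
  | case2 v =>
    simp only [pairUp, List.mem_singleton] at hp
    subst hp; simp
  | case3 u v rest ih =>
    simp only [pairUp, List.mem_cons] at hp
    rcases hp with h | h
    · subst h; simp
    · have := ih h
      exact ⟨List.mem_cons_of_mem _ (List.mem_cons_of_mem _ this.1),
             List.mem_cons_of_mem _ (List.mem_cons_of_mem _ this.2)⟩

lemma pairUp_pair_sum {d : α → ℝ} {l : List α} (hl : ∀ x ∈ l, 0 ≤ d x)
    {p : α × α} (hp : p ∈ pairUp l) (hne : p.1 ≠ p.2) :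
    d p.1 + d p.2 ≤ (l.map d).sum := by
  induction l using pairUp.induct with
  | case1 => simp [pairUp] at hp
  | case2 v =>
    simp only [pairUp, List.mem_singleton] at hp
    subst hp; exact absurd rfl hne
  | case3 u v rest ih =>
    simp only [pairUp, List.mem_cons] at hp
    have hrest : (0:ℝ) ≤ (rest.map d).sum := by
      apply List.sum_nonneg
      intro x hx
      simp only [List.mem_map] at hx
      obtain ⟨y, hy, rfl⟩ := hx
      exact hl y (by simp [hy])
    rcases hp with h | h
    · subst h
      simp only [List.map_cons, List.sum_cons]
      linarith
    · have := ih (fun x hx => hl x (by simp [hx])) h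
      simp only [List.map_cons, List.sum_cons]
      have hu : 0 ≤ d u := hl u (by simp)
      have hv : 0 ≤ d v := hl v (by simp)
      linarith

lemma matchingEndpoints_pairUp [DecidableEq α] {l : List α} (hl : l.Nodup) :
    matchingEndpoints (pairUp l) = l := by
  induction l using pairUp.induct with
  | case1 => rfl
  | case2 v => simp [pairUp, matchingEndpoints]
  | case3 u v rest ih =>
    have huv : u ≠ v := by
      intro h; subst h
      exact (List.nodup_cons.1 hl).1 (by simp)
    have hrest : rest.Nodup := ((List.nodup_cons.1 (List.nodup_cons.1 hl).2).2)
    simp only [pairUp, matchingEndpoints, List.map_cons, List.flatten_cons, if_neg huv]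
    show u :: v :: matchingEndpoints (pairUp rest) = u :: v :: rest
    rw [ih hrest]

lemma matchingEndpoints_flatten [DecidableEq α] : ∀ L : List (List (α × α)),
    matchingEndpoints L.flatten = (L.map matchingEndpoints).flatten
  | [] => rfl
  | l :: L => by
      simp only [List.flatten_cons, List.map_cons, matchingEndpoints, List.map_append,
        List.flatten_append]
      rw [← matchingEndpoints_flatten L]; rfl

lemma matchingCost_flatten (c : α → α → ℝ) (r : α) : ∀ L : List (List (α × α)),
    matchingCost c r L.flatten = (L.map (matchingCost c r)).sum
  | [] => rfl
  | l :: L => by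
      simp only [List.flatten_cons, List.map_cons, List.sum_cons, matchingCost,
        List.map_append, List.sum_append]
      rw [← matchingCost_flatten c r L]; rfl

lemma flatten_map_sublist (f : List α → List α) (hf : ∀ l, f l <+ l) :
    ∀ S : List (List α), (S.map f).flatten <+ S.flatten
  | [] => List.Sublist.refl _
  | T :: S => by
      simp only [List.map_cons, List.flatten_cons]
      exact (hf T).append (flatten_map_sublist f hf S)

end CVRPAux

open CVRPAux List in
/-- The minimum cost of a perfect matching in the auxiliary graph `G_aux` on the big
clients (demand `> 1/3`) is at most the cost of any feasible CVRP solution; in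
particular it is at most `opt`.  Here a perfect matching is a list of edges/loops on
big clients, each pair of matched distinct clients having total demand at most 1,
covering every big client exactly once. -/
theorem matching_cost_le_opt {α : Type*} [DecidableEq α]
    (V : Finset α) (r : α) (hr : r ∉ V)
    (c : α → α → ℝ) (d : α → ℝ)
    (hsymm : ∀ x y, c x y = c y x)
    (htri : ∀ x y z, c x z ≤ c x y + c y z)
    (hnonneg : ∀ x y, 0 ≤ c x y)
    (hself : ∀ x, c x x = 0)
    (hd : ∀ v ∈ V, 0 < d v ∧ d v ≤ 1)
    (S : List (List α))
    (hcover : ∀ v, v ∈ V ↔ v ∈ S.flatten)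
    (hnodup : S.flatten.Nodup)
    (hcap : ∀ T ∈ S, (T.map d).sum ≤ 1) :
    ∃ M : List (α × α),
      (∀ p ∈ M, p.1 ≠ p.2 → d p.1 + d p.2 ≤ 1) ∧
      (matchingEndpoints M).Nodup ∧
      (∀ v, v ∈ matchingEndpoints M ↔ v ∈ V ∧ 1 / 3 < d v) ∧
      matchingCost c r M ≤ (S.map (tourCost c r)).sum := by
  classical
  set big : α → Bool := fun v => decide ((1:ℝ) / 3 < d v) with hbig
  set g : List α → List α := fun T => T.filter big with hg
  -- every element of a tour is in V
  have hmemV : ∀ T ∈ S, ∀ v ∈ T, v ∈ V := by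
    intro T hT v hv
    exact (hcover v).2 (List.mem_flatten.2 ⟨T, hT, hv⟩)
  have hdnn : ∀ T ∈ S, ∀ v ∈ T, 0 ≤ d v := fun T hT v hv =>
    (hd v (hmemV T hT v hv)).1.le
  refine ⟨(S.map fun T => pairUp (g T)).flatten, ?_, ?_, ?_, ?_⟩
  · -- matched pairs satisfy the capacity constraint
    intro p hp hne
    simp only [List.mem_flatten, List.mem_map] at hp
    obtain ⟨l, ⟨T, hT, rfl⟩, hpl⟩ := hp
    have hsub : g T <+ T := List.filter_sublist (l := T)
    have h1 : d p.1 + d p.2 ≤ ((g T).map d).sum :=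
      pairUp_pair_sum (fun x hx => hdnn T hT x (hsub.mem hx)) hpl hne
    have h2 : ((g T).map d).sum ≤ (T.map d).sum :=
      (hsub.map d).sum_le_sum (fun x hx => by
        simp only [List.mem_map] at hx
        obtain ⟨y, hy, rfl⟩ := hx
        exact hdnn T hT y hy)
    exact h1.trans (h2.trans (hcap T hT))
  · -- endpoints are nodup
    have heq : matchingEndpoints ((S.map fun T => pairUp (g T)).flatten)
        = (S.map g).flatten := by
      rw [matchingEndpoints_flatten, List.map_map]
      congr 1
      apply List.map_congr_left
      intro T hT
      exact matchingEndpoints_pairUp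
        ((List.filter_sublist (l := T)).nodup ((List.sublist_flatten_of_mem hT).nodup hnodup))
    rw [heq]
    exact (flatten_map_sublist g (fun l => List.filter_sublist (l := l)) S).nodup hnodup
  · -- endpoints are exactly the big clients
    have heq : matchingEndpoints ((S.map fun T => pairUp (g T)).flatten)
        = (S.map g).flatten := by
      rw [matchingEndpoints_flatten, List.map_map]
      congr 1
      apply List.map_congr_left
      intro T hT
      exact matchingEndpoints_pairUp
        ((List.filter_sublist (l := T)).nodup ((List.sublist_flatten_of_mem hT).nodup hnodup))
    rw [heq]
    intro v
    simp only [List.mem_flatten, List.mem_map]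
    constructor
    · rintro ⟨l, ⟨T, hT, rfl⟩, hvl⟩
      simp only [hg, List.mem_filter, hbig, decide_eq_true_eq] at hvl
      exact ⟨hmemV T hT v hvl.1, hvl.2⟩
    · rintro ⟨hv, hbigv⟩
      obtain ⟨T, hT, hvT⟩ := List.mem_flatten.1 ((hcover v).1 hv)
      exact ⟨g T, ⟨T, hT, rfl⟩, by
        simp only [hg, List.mem_filter, hbig, decide_eq_true_eq]
        exact ⟨hvT, hbigv⟩⟩
  · -- cost bound
    rw [matchingCost_flatten, List.map_map]
    apply List.sum_le_sum
    intro T hT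
    simp only [Function.comp]
    -- each big client has demand > 1/3, so at most 2 big clients per tour
    have hsub : g T <+ T := List.filter_sublist (l := T)
    have hlen : ¬ ∃ a b x rest, g T = a :: b :: x :: rest := by
      rintro ⟨a, b, x, rest, hgt⟩
      have hmem : ∀ y ∈ g T, (1:ℝ)/3 < d y := by
        intro y hy
        simp only [hg, List.mem_filter, hbig, decide_eq_true_eq] at hy
        exact hy.2
      have hsum : ((g T).map d).sum ≤ (T.map d).sum :=
        (hsub.map d).sum_le_sum (fun z hz => by
          simp only [List.mem_map] at hz
          obtain ⟨y, hy, rfl⟩ := hz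
          exact hdnn T hT y hy)
      have hrest : (0:ℝ) ≤ (rest.map d).sum := by
        apply List.sum_nonneg
        intro z hz
        simp only [List.mem_map] at hz
        obtain ⟨y, hy, rfl⟩ := hz
        exact hdnn T hT y (hsub.mem (by rw [hgt]; simp [hy]))
      have ha := hmem a (by rw [hgt]; simp)
      have hb := hmem b (by rw [hgt]; simp)
      have hx := hmem x (by rw [hgt]; simp)
      rw [hgt] at hsum
      simp only [List.map_cons, List.sum_cons] at hsum
      have := hcap T hT
      linarith
    -- the cost of the paired-up big clients equals the shortcut walk cost
    have hkey : matchingCost c r (pairUp (g T)) = walkCost c (r :: (g T ++ [r])) := by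
      rcases hgt : g T with _ | ⟨u, _ | ⟨v, _ | ⟨x, rest⟩⟩⟩
      · simp [matchingCost, pairUp, walkCost, hself]
      · simp [matchingCost, pairUp, walkCost, hself]
      · simp [matchingCost, pairUp, walkCost, add_assoc]
      · exact absurd ⟨u, v, x, rest, hgt⟩ hlen
    rw [hkey]
    exact walkCost_shortcut c htri hnonneg (hsub.append (List.Sublist.refl [r])) r
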